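/- Let $v \in H^2(D)$ be harmonic in a bounded open set $D$ containing $\overline{B(y_0,r)}$ for some $r > 0$. Then $\left(\int_{B(y_0,r)} |\nabla v|^2 (r^2 - |y - y_0|^2)\,dy\right)^2 \leq 4 \left(\int_{B(y_0,r)} |(y-y_0)\cdot\nabla v|^2\,dy\right) \left(\int_{B(y_0,r)} |v|^2\,dy\right)$. -/

import Mathlib

open MeasureTheory Metric Set Filter
open scoped NNReal Topology

lemma cs_integral {α : Type*} [MeasurableSpace α] (μ : Measure α) (f g : α → ℝ)
    (hf : Integrable (fun x => f x ^ 2) μ) (hg : Integrable (fun x => g x ^ 2) μ)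
    (hfg : Integrable (fun x => f x * g x) μ) :
    (∫ x, f x * g x ∂μ) ^ 2 ≤ (∫ x, f x ^ 2 ∂μ) * ∫ x, g x ^ 2 ∂μ := by
  have key : ∀ t : ℝ, 0 ≤ (∫ x, g x ^ 2 ∂μ) * (t * t)
      + (2 * ∫ x, f x * g x ∂μ) * t + (∫ x, f x ^ 2 ∂μ) := by
    intro t
    have h2 : 0 ≤ ∫ x, (f x + t * g x) ^ 2 ∂μ := integral_nonneg fun x => sq_nonneg _
    have h3 : ∫ x, (f x + t * g x) ^ 2 ∂μ = (∫ x, g x ^ 2 ∂μ) * (t * t)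
        + (2 * ∫ x, f x * g x ∂μ) * t + (∫ x, f x ^ 2 ∂μ) := by
      have heq : (fun x => (f x + t * g x) ^ 2)
          = fun x => f x ^ 2 + ((2 * t) * (f x * g x) + (t * t) * g x ^ 2) := by
        funext x; ring
      rw [heq, integral_add, integral_add, MeasureTheory.integral_const_mul, MeasureTheory.integral_const_mul]
      · ring
      all_goals first
        | exact hfg.const_mul _
        | exact hg.const_mul _
        | exact hf
        | exact (hfg.const_mul _).add (hg.const_mul _)
    linarith [h3 ▸ h2]
  have hd := discrim_le_zero key
  rw [discrim] at hd
  nlinarith [hd]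

lemma lipschitzWith_mul_of_bounded {α : Type*} [PseudoMetricSpace α] {f g : α → ℝ}
    {Kf Kg : ℝ≥0} (hf : LipschitzWith Kf f) (hg : LipschitzWith Kg g)
    {A B : ℝ≥0} (hA : ∀ x, |f x| ≤ A) (hB : ∀ x, |g x| ≤ B) :
    LipschitzWith (A * Kg + B * Kf) (fun x => f x * g x) := by
  apply LipschitzWith.of_dist_le_mul
  intro x y
  have h1 : dist (f x * g x) (f y * g y) ≤ |f x| * dist (g x) (g y) + |g y| * dist (f x) (f y) := by
    rw [Real.dist_eq, Real.dist_eq, Real.dist_eq]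
    calc |f x * g x - f y * g y| = |f x * (g x - g y) + g y * (f x - f y)| := by ring_nf
      _ ≤ |f x * (g x - g y)| + |g y * (f x - f y)| := abs_add_le _ _
      _ = |f x| * |g x - g y| + |g y| * |f x - f y| := by rw [abs_mul, abs_mul]
  have h2 := hf.dist_le_mul x y
  have h3 := hg.dist_le_mul x y
  have hA' := hA x
  have hB' := hB y
  have d0 : (0:ℝ) ≤ dist x y := dist_nonneg
  have d1 : (0:ℝ) ≤ dist (f x) (f y) := dist_nonneg
  have d2 : (0:ℝ) ≤ dist (g x) (g y) := dist_nonneg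
  have habs : (0:ℝ) ≤ |f x| := abs_nonneg _
  have habs2 : (0:ℝ) ≤ |g y| := abs_nonneg _
  push_cast
  nlinarith [mul_le_mul hA' h3 d2 (NNReal.coe_nonneg A), mul_le_mul hB' h2 d1 (NNReal.coe_nonneg B)]

lemma lipschitz_weight {E : Type*} [NormedAddCommGroup E] (y₀ : E) {r : ℝ} (hr : 0 < r) :
    LipschitzWith (Real.toNNReal (2 * r)) (fun y : E => max (r ^ 2 - ‖y - y₀‖ ^ 2) 0) := by
  apply LipschitzWith.of_dist_le_mul
  intro x y
  have hx := norm_nonneg (x - y₀)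
  have hy := norm_nonneg (y - y₀)
  have hxy : |‖x - y₀‖ - ‖y - y₀‖| ≤ dist x y := by
    have := abs_norm_sub_norm_le (x - y₀) (y - y₀)
    simpa [dist_eq_norm, sub_sub_sub_cancel_right] using this
  set a := ‖x - y₀‖ with ha0
  set b := ‖y - y₀‖ with hb0
  have hco : (Real.toNNReal (2 * r) : ℝ) = 2 * r := Real.coe_toNNReal _ (by positivity)
  rw [Real.dist_eq, hco]
  have h1 : a - b ≤ |a - b| := le_abs_self _
  have h2 : b - a ≤ |a - b| := by rw [abs_sub_comm]; exact le_abs_self _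
  have h3 : (0:ℝ) ≤ |a - b| := abs_nonneg _
  have key : |max (r ^ 2 - a ^ 2) 0 - max (r ^ 2 - b ^ 2) 0| ≤ 2 * r * |a - b| := by
    rcases le_total (r ^ 2 - a ^ 2) 0 with hA | hA <;> rcases le_total (r ^ 2 - b ^ 2) 0 with hB | hB
    · rw [max_eq_right hA, max_eq_right hB]; simp; positivity
    · have hra : r ≤ a := by nlinarith
      have hbr : b ≤ r := by nlinarith
      rw [max_eq_right hA, max_eq_left hB, abs_le]
      constructor <;> nlinarith
    · have hrb : r ≤ b := by nlinarith
      have har : a ≤ r := by nlinarith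
      rw [max_eq_left hA, max_eq_right hB, abs_le]
      constructor <;> nlinarith
    · have har : a ≤ r := by nlinarith
      have hbr : b ≤ r := by nlinarith
      rw [max_eq_left hA, max_eq_left hB, abs_le]
      constructor <;> nlinarith
  calc |max (r ^ 2 - a ^ 2) 0 - max (r ^ 2 - b ^ 2) 0| ≤ 2 * r * |a - b| := key
    _ ≤ 2 * r * dist x y := by nlinarith

section keyid
variable {n : ℕ}

local notation "E" => EuclideanSpace ℝ (Fin (n + 1))

set_option maxHeartbeats 2000000 in
lemma key_identity (y₀ : E) {r : ℝ} (hr : 0 < r)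
    (u : E → ℝ) (hu : ContDiff ℝ 2 u) (hsupp : HasCompactSupport u)
    (hlap : ∀ y ∈ ball y₀ r, ∑ i, fderiv ℝ (fderiv ℝ u) y (EuclideanSpace.single i 1)
      (EuclideanSpace.single i 1) = 0) :
    ∫ y in ball y₀ r, ‖gradient u y‖ ^ 2 * (r ^ 2 - ‖y - y₀‖ ^ 2)
      = 2 * ∫ y in ball y₀ r, u y * (inner ℝ (y - y₀) (gradient u y) : ℝ) := by
  classical
  set e : Fin (n + 1) → E := fun i => EuclideanSpace.single i 1 with he
  -- basic regularity
  have hu1 : ContDiff ℝ 1 (fderiv ℝ u) := hu.fderiv_right (by norm_num)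
  have hud : Differentiable ℝ u := hu.differentiable (by norm_num)
  have hf₁d : Differentiable ℝ (fderiv ℝ u) := hu1.differentiable (by norm_num)
  have hcont1 : Continuous (fderiv ℝ u) := hu1.continuous
  have hcont2 : Continuous (fderiv ℝ (fderiv ℝ u)) := hu1.continuous_fderiv (by norm_num)
  have hcontu : Continuous u := hu.continuous
  -- gradient facts
  have hgradf : ∀ (y w : E), (inner ℝ (gradient u y) w : ℝ) = fderiv ℝ u y w := by
    intro y w; rw [gradient, InnerProductSpace.toDual_symm_apply]
  have hgradnorm : ∀ y : E, ‖gradient u y‖ ^ 2 = ∑ i, (fderiv ℝ u y (e i)) ^ 2 := by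
    intro y
    rw [EuclideanSpace.norm_eq, Real.sq_sqrt (by positivity)]
    refine Finset.sum_congr rfl fun i _ => ?_
    rw [← hgradf y (e i), he]
    rw [EuclideanSpace.inner_single_right]
    simp [Real.norm_eq_abs, sq_abs]
  have hinner2 : ∀ y : E, (inner ℝ (y - y₀) (gradient u y) : ℝ)
      = ∑ i, (y - y₀) i * fderiv ℝ u y (e i) := by
    intro y
    rw [PiLp.inner_apply]
    refine Finset.sum_congr rfl fun i _ => ?_
    rw [← hgradf y (e i), he, EuclideanSpace.inner_single_right]
    simp [RCLike.inner_apply, mul_comm]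
  have hgradcont : Continuous (fun y : E => gradient u y) := by
    have : (fun y : E => gradient u y)
        = fun y => (InnerProductSpace.toDual ℝ E).symm (fderiv ℝ u y) := by
      funext y; rw [gradient]
    rw [this]
    exact (InnerProductSpace.toDual ℝ E).symm.continuous.comp hcont1
  -- the weight
  set W : E → ℝ := fun y => max (r ^ 2 - ‖y - y₀‖ ^ 2) 0 with hWdef
  have hWlip := lipschitz_weight y₀ hr
  have hWbd : ∀ y : E, |W y| ≤ ((Real.toNNReal (r ^ 2) : ℝ≥0) : ℝ) := by
    intro y
    rw [Real.coe_toNNReal _ (by positivity)]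
    rw [abs_of_nonneg (le_max_right _ _)]
    apply max_le _ (by positivity)
    nlinarith [norm_nonneg (y - y₀)]
  have hWball : ∀ y ∈ ball y₀ r, W y = r ^ 2 - ‖y - y₀‖ ^ 2 := by
    intro y hy
    have hy' : ‖y - y₀‖ < r := by rwa [mem_ball, dist_eq_norm] at hy
    exact max_eq_left (by nlinarith [norm_nonneg (y - y₀)])
  -- per coordinate functions
  set P : Fin (n + 1) → E → ℝ := fun i y => u y * fderiv ℝ u y (e i) with hPdef
  set Q : Fin (n + 1) → E → ℝ := fun i y =>
    -(2 * ((y - y₀) i)) * (u y * fderiv ℝ u y (e i))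
    + (r ^ 2 - ‖y - y₀‖ ^ 2) * (fderiv ℝ u y (e i) * fderiv ℝ u y (e i)
        + u y * fderiv ℝ (fderiv ℝ u) y (e i) (e i)) with hQdef
  have happly : ∀ i, Continuous (fun y : E => fderiv ℝ u y (e i)) := by
    intro i
    exact ((ContinuousLinearMap.apply ℝ ℝ (e i)).continuous).comp hcont1
  have happly2 : ∀ i, Continuous (fun y : E => fderiv ℝ (fderiv ℝ u) y (e i) (e i)) := by
    intro i
    have h1 : Continuous (fun y : E => fderiv ℝ (fderiv ℝ u) y (e i)) :=
      ((ContinuousLinearMap.apply ℝ (E →L[ℝ] ℝ) (e i)).continuous).comp hcont2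
    exact ((ContinuousLinearMap.apply ℝ ℝ (e i)).continuous).comp h1
  have hproj : ∀ i, Continuous (fun y : E => (y - y₀) i) := by
    intro i
    exact (PiLp.continuous_apply 2 _ i).comp (continuous_id.sub continuous_const)
  have hQcont : ∀ i, Continuous (Q i) := by
    intro i
    apply Continuous.add
    · exact ((continuous_const.mul (hproj i)).neg).mul (hcontu.mul (happly i))
    · exact (continuous_const.sub ((continuous_id.sub continuous_const).norm.pow 2)).mul
        (((happly i).mul (happly i)).add (hcontu.mul (happly2 i)))
  have hQint : ∀ i, IntegrableOn (Q i) (ball y₀ r) volume := fun i =>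
    (((hQcont i).continuousOn).integrableOn_compact (isCompact_closedBall y₀ r)).mono_set
      ball_subset_closedBall
  -- Lipschitz and support of G i = W * P i
  have hGdata : ∀ i, ∃ K : ℝ≥0, LipschitzWith K (fun y => W y * P i y) := by
    intro i
    have hPc1 : ContDiff ℝ 1 (P i) := (hu.of_le one_le_two).mul (hu1.clm_apply contDiff_const)
    have hPsupp : HasCompactSupport (P i) := hsupp.mul_right
    obtain ⟨KP, hPlip⟩ := ContDiff.lipschitzWith_of_hasCompactSupport hPsupp hPc1 (by norm_num)
    obtain ⟨CP, hPbd⟩ := hPc1.continuous.bounded_above_of_compact_support hPsupp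
    refine ⟨_, lipschitzWith_mul_of_bounded (B := Real.toNNReal CP) hWlip hPlip hWbd (fun x => ?_)⟩
    calc |P i x| = ‖P i x‖ := (Real.norm_eq_abs _).symm
      _ ≤ CP := hPbd x
      _ ≤ ((Real.toNNReal CP : ℝ≥0) : ℝ) := by rw [Real.coe_toNNReal']; exact le_max_left _ _
  have hGsupp : ∀ i, HasCompactSupport (fun y => W y * P i y) := by
    intro i
    have hPsupp : HasCompactSupport (P i) := hsupp.mul_right
    exact hPsupp.mul_left
  -- the fundamental theorem: integral of line derivative vanishes
  have hzero : ∀ i, ∫ y, lineDeriv ℝ (fun z => W z * P i z) y (e i) = 0 := by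
    intro i
    obtain ⟨K, hGlip⟩ := hGdata i
    have h := LipschitzWith.integral_lineDeriv_mul_eq (μ := volume)
      (LipschitzWith.const (1 : ℝ)) hGlip (hGsupp i) (-(e i))
    have hldc : ∀ (x w : E), lineDeriv ℝ (fun _ : E => (1 : ℝ)) x w = 0 := by
      intro x w
      have h2 := ((hasFDerivAt_const (𝕜 := ℝ) (1 : ℝ) x).hasLineDerivAt w).lineDeriv
      simpa using h2
    simpa [hldc, neg_neg] using h.symm
  -- identify the line derivative a.e.
  have hQline : ∀ i, ∀ᵐ y : E, lineDeriv ℝ (fun z => W z * P i z) y (e i)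
      = (ball y₀ r).indicator (Q i) y := by
    intro i
    have hsph : volume (sphere y₀ r) = 0 := Measure.addHaar_sphere (μ := (volume : Measure E)) y₀ r
    filter_upwards [measure_eq_zero_iff_ae_notMem.mp hsph] with y hy
    by_cases hmem : y ∈ ball y₀ r
    · rw [indicator_of_mem hmem]
      -- derivative of the weight
      have hsub : HasFDerivAt (fun z : E => z - y₀) (ContinuousLinearMap.id ℝ E) y := by
        simpa using (hasFDerivAt_id y).sub_const y₀
      have hW' : HasFDerivAt (fun z : E => r ^ 2 - ‖z - y₀‖ ^ 2)
          (-(2 • (innerSL ℝ (y - y₀)).comp (ContinuousLinearMap.id ℝ E))) y :=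
        (hsub.norm_sq).const_sub (r ^ 2)
      -- derivative of z ↦ ∂ᵢu z
      have hDi : HasFDerivAt (fun z : E => fderiv ℝ u z (e i))
          ((ContinuousLinearMap.apply ℝ ℝ (e i)).comp (fderiv ℝ (fderiv ℝ u) y)) y :=
        ((ContinuousLinearMap.apply ℝ ℝ (e i)).hasFDerivAt).comp y (hf₁d y).hasFDerivAt
      have hP' : HasFDerivAt (P i)
          (u y • ((ContinuousLinearMap.apply ℝ ℝ (e i)).comp (fderiv ℝ (fderiv ℝ u) y))
            + fderiv ℝ u y (e i) • fderiv ℝ u y) y :=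
        ((hud y).hasFDerivAt).mul hDi
      have hψ : HasFDerivAt (fun z : E => (r ^ 2 - ‖z - y₀‖ ^ 2) * P i z)
          ((r ^ 2 - ‖y - y₀‖ ^ 2) • (u y • ((ContinuousLinearMap.apply ℝ ℝ (e i)).comp
              (fderiv ℝ (fderiv ℝ u) y)) + fderiv ℝ u y (e i) • fderiv ℝ u y)
            + P i y • (-(2 • (innerSL ℝ (y - y₀)).comp (ContinuousLinearMap.id ℝ E)))) y :=
        hW'.mul hP'
      have hcong : (fun z => W z * P i z) =ᶠ[𝓝 y] (fun z : E => (r ^ 2 - ‖z - y₀‖ ^ 2) * P i z) := by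
        filter_upwards [isOpen_ball.mem_nhds hmem] with z hz
        rw [hWball z hz]
      have hL : HasLineDerivAt ℝ (fun z => W z * P i z)
          (((r ^ 2 - ‖y - y₀‖ ^ 2) • (u y • ((ContinuousLinearMap.apply ℝ ℝ (e i)).comp
              (fderiv ℝ (fderiv ℝ u) y)) + fderiv ℝ u y (e i) • fderiv ℝ u y)
            + P i y • (-(2 • (innerSL ℝ (y - y₀)).comp (ContinuousLinearMap.id ℝ E)))) (e i))
          y (e i) :=
        (hψ.hasLineDerivAt (e i)).congr_of_eventuallyEq hcong
      rw [hL.lineDeriv]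
      have hip : (inner ℝ (y - y₀) (e i) : ℝ) = (y - y₀) i := by
        rw [he, EuclideanSpace.inner_single_right]
        simp [RCLike.inner_apply]
      simp only [ContinuousLinearMap.add_apply, ContinuousLinearMap.smul_apply,
        ContinuousLinearMap.coe_smul', Pi.smul_apply, ContinuousLinearMap.comp_apply,
        ContinuousLinearMap.neg_apply, ContinuousLinearMap.apply_apply,
        ContinuousLinearMap.coe_id', id_eq, innerSL_apply_apply, hip, hQdef, hPdef,
        smul_eq_mul]
      ring
    · rw [indicator_of_notMem hmem]
      have hyout : r < dist y y₀ := by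
        rcases lt_trichotomy (dist y y₀) r with h | h | h
        · exact absurd (mem_ball.mpr h) hmem
        · exact absurd (mem_sphere.mpr h) hy
        · exact h
      have hcong : (fun z => W z * P i z) =ᶠ[𝓝 y] (fun _ : E => (0 : ℝ)) := by
        have hopen : IsOpen {z : E | r < dist z y₀} := by
          have : {z : E | r < dist z y₀} = (closedBall y₀ r)ᶜ := by
            ext z; simp [mem_closedBall, not_le]
          rw [this]
          exact isClosed_closedBall.isOpen_compl
        filter_upwards [hopen.mem_nhds hyout] with z hz
        have hzn : r < ‖z - y₀‖ := by rwa [← dist_eq_norm]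
        have : W z = 0 := max_eq_right (by nlinarith [norm_nonneg (z - y₀)])
        simp [this]
      have hL : HasLineDerivAt ℝ (fun z => W z * P i z) 0 y (e i) := by
        have h0 : HasLineDerivAt ℝ (fun _ : E => (0 : ℝ)) ((0 : E →L[ℝ] ℝ) (e i)) y (e i) :=
          (hasFDerivAt_const (𝕜 := ℝ) (0 : ℝ) y).hasLineDerivAt (e i)
        simpa using h0.congr_of_eventuallyEq hcong
      rw [hL.lineDeriv]
  -- each coordinate integral vanishes
  have hzero' : ∀ i, ∫ y in ball y₀ r, Q i y = 0 := by
    intro i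
    have h1 := hzero i
    rw [integral_congr_ae (hQline i), integral_indicator measurableSet_ball] at h1
    exact h1
  have hsum : ∫ y in ball y₀ r, (∑ i, Q i y) = 0 := by
    rw [integral_finset_sum _ (fun i _ => hQint i)]
    simp [hzero']
  -- pointwise identification on the ball
  have hEqOn : EqOn (fun y => ∑ i, Q i y)
      (fun y => ‖gradient u y‖ ^ 2 * (r ^ 2 - ‖y - y₀‖ ^ 2)
        - 2 * (u y * (inner ℝ (y - y₀) (gradient u y) : ℝ))) (ball y₀ r) := by
    intro y hy
    have hlapy := hlap y hy
    simp only
    have hterm : ∀ i, Q i y = -((2 * u y) * ((y - y₀) i * fderiv ℝ u y (e i)))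
        + (r ^ 2 - ‖y - y₀‖ ^ 2) * (fderiv ℝ u y (e i)) ^ 2
        + ((r ^ 2 - ‖y - y₀‖ ^ 2) * u y)
          * fderiv ℝ (fderiv ℝ u) y (e i) (e i) := by
      intro i; simp only [hQdef]; ring
    rw [Finset.sum_congr rfl (fun i _ => hterm i)]
    rw [Finset.sum_add_distrib, Finset.sum_add_distrib, ← Finset.mul_sum, ← Finset.mul_sum]
    rw [show (∑ x, -(2 * u y * ((y - y₀) x * fderiv ℝ u y (e x))))
        = -(2 * u y * ∑ x, (y - y₀) x * fderiv ℝ u y (e x)) from by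
      rw [Finset.mul_sum, ← Finset.sum_neg_distrib]]
    rw [show (∑ i, fderiv ℝ (fderiv ℝ u) y (e i) (e i)) = 0 from by
      simpa [he] using hlapy]
    rw [hgradnorm y, hinner2 y]
    ring
  have hsum2 : ∫ y in ball y₀ r, (‖gradient u y‖ ^ 2 * (r ^ 2 - ‖y - y₀‖ ^ 2)
      - 2 * (u y * (inner ℝ (y - y₀) (gradient u y) : ℝ))) = 0 := by
    rw [← setIntegral_congr_fun measurableSet_ball hEqOn]
    exact hsum
  -- integrability of both parts
  have hInt1 : IntegrableOn (fun y : E => ‖gradient u y‖ ^ 2 * (r ^ 2 - ‖y - y₀‖ ^ 2))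
      (ball y₀ r) volume := by
    have hc : Continuous (fun y : E => ‖gradient u y‖ ^ 2 * (r ^ 2 - ‖y - y₀‖ ^ 2)) :=
      (hgradcont.norm.pow 2).mul
        (continuous_const.sub ((continuous_id.sub continuous_const).norm.pow 2))
    exact ((hc.continuousOn).integrableOn_compact (isCompact_closedBall y₀ r)).mono_set
      ball_subset_closedBall
  have hInt2 : IntegrableOn (fun y : E => u y * (inner ℝ (y - y₀) (gradient u y) : ℝ))
      (ball y₀ r) volume := by
    have hc : Continuous (fun y : E => u y * (inner ℝ (y - y₀) (gradient u y) : ℝ)) :=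
      hcontu.mul (((continuous_id.sub continuous_const)).inner hgradcont)
    exact ((hc.continuousOn).integrableOn_compact (isCompact_closedBall y₀ r)).mono_set
      ball_subset_closedBall
  rw [integral_sub hInt1 (hInt2.const_mul 2), MeasureTheory.integral_const_mul] at hsum2
  linarith [hsum2]

end keyid

/-- The Laplacian of `v : ℝ^d → ℝ` at `y`. -/
noncomputable def euclideanLaplacian {d : ℕ} (v : EuclideanSpace ℝ (Fin d) → ℝ)
    (y : EuclideanSpace ℝ (Fin d)) : ℝ :=
  ∑ i : Fin d, iteratedFDeriv ℝ 2 v y ![EuclideanSpace.single i 1, EuclideanSpace.single i 1]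

set_option maxHeartbeats 2000000 in
theorem stmt_12 (N : ℕ) (hN : 1 ≤ N)
    (D : Set (EuclideanSpace ℝ (Fin (N + 1)))) (hDo : IsOpen D)
    (hDb : Bornology.IsBounded D)
    (y₀ : EuclideanSpace ℝ (Fin (N + 1))) (r : ℝ) (hr : 0 < r)
    (hball : Metric.closedBall y₀ r ⊆ D)
    (v : EuclideanSpace ℝ (Fin (N + 1)) → ℝ) (hv : ContDiffOn ℝ 2 v D)
    (hharm : ∀ y ∈ D, euclideanLaplacian v y = 0) :
    (∫ y in Metric.ball y₀ r, ‖gradient v y‖ ^ 2 * (r ^ 2 - ‖y - y₀‖ ^ 2)) ^ 2 ≤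
      4 * (∫ y in Metric.ball y₀ r, (inner ℝ (y - y₀) (gradient v y) : ℝ) ^ 2) *
        ∫ y in Metric.ball y₀ r, (v y) ^ 2 := by
  classical
  obtain ⟨δ, hδpos, hδsub⟩ :=
    (isCompact_closedBall y₀ r).exists_cthickening_subset_open hDo hball
  have hsub2 : closedBall y₀ (r + δ) ⊆ D := by
    refine subset_trans ?_ hδsub
    intro z hz
    rw [mem_closedBall] at hz
    by_cases hzr : dist z y₀ ≤ r
    · exact self_subset_cthickening _ (mem_closedBall.mpr hzr)
    · push_neg at hzr
      have hd0 : 0 < dist z y₀ := lt_trans hr hzr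
      set w := y₀ + (r / dist z y₀) • (z - y₀) with hw
      have hsub : w - y₀ = (r / dist z y₀) • (z - y₀) := by
        rw [hw, add_sub_cancel_left]
      have hnorm : ‖z - y₀‖ = dist z y₀ := (dist_eq_norm z y₀).symm
      have hwball : w ∈ closedBall y₀ r := by
        rw [mem_closedBall, dist_eq_norm, hsub, norm_smul, Real.norm_eq_abs,
          abs_of_nonneg (by positivity), hnorm, div_mul_cancel₀ _ (ne_of_gt hd0)]
      have hzw : z - w = (1 - r / dist z y₀) • (z - y₀) := by
        rw [hw, sub_smul, one_smul]
        abel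
      have hdzw : dist z w ≤ δ := by
        have hcoef : (0:ℝ) ≤ 1 - r / dist z y₀ := by
          rw [sub_nonneg, div_le_one hd0]; exact hzr.le
        rw [dist_eq_norm, hzw, norm_smul, Real.norm_eq_abs, abs_of_nonneg hcoef, hnorm]
        have : (1 - r / dist z y₀) * dist z y₀ = dist z y₀ - r := by field_simp
        rw [this]; linarith
      exact mem_cthickening_of_dist_le z w δ _ hwball hdzw
  set χ : ContDiffBump y₀ := ⟨r + δ / 2, r + δ, by linarith, by linarith⟩ with hχ
  set u : EuclideanSpace ℝ (Fin (N + 1)) → ℝ := fun y => χ y * v y with hudef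
  have hχsub : closedBall y₀ χ.rOut ⊆ D := hsub2
  have hu : ContDiff ℝ 2 u := by
    rw [contDiff_iff_contDiffAt]
    intro x
    by_cases hx : x ∈ closedBall y₀ χ.rOut
    · exact χ.contDiff.contDiffAt.mul (hv.contDiffAt (hDo.mem_nhds (hχsub hx)))
    · have hopen : IsOpen (closedBall y₀ χ.rOut)ᶜ := isClosed_closedBall.isOpen_compl
      have hev : u =ᶠ[𝓝 x] (fun _ => (0 : ℝ)) := by
        filter_upwards [hopen.mem_nhds hx] with z hz
        have hzsupp : z ∉ tsupport (χ : EuclideanSpace ℝ (Fin (N + 1)) → ℝ) := by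
          rw [χ.tsupport_eq]; exact hz
        have : χ z = 0 := image_eq_zero_of_notMem_tsupport hzsupp
        simp [hudef, this]
      exact (contDiffAt_const (c := (0 : ℝ))).congr_of_eventuallyEq hev
  have hsupp : HasCompactSupport u := χ.hasCompactSupport.mul_right
  have hEq : ∀ y ∈ ball y₀ (r + δ / 2), u y = v y := by
    intro y hy
    have : χ y = 1 := χ.one_of_mem_closedBall (ball_subset_closedBall hy)
    simp [hudef, this]
  have hfd : ∀ y ∈ ball y₀ (r + δ / 2), fderiv ℝ u y = fderiv ℝ v y := by
    intro y hy
    apply Filter.EventuallyEq.fderiv_eq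
    filter_upwards [isOpen_ball.mem_nhds hy] with z hz
    exact hEq z hz
  have hball_sub : ball y₀ r ⊆ ball y₀ (r + δ / 2) := ball_subset_ball (by linarith)
  have hlap : ∀ y ∈ ball y₀ r, ∑ i, fderiv ℝ (fderiv ℝ u) y (EuclideanSpace.single i 1)
      (EuclideanSpace.single i 1) = 0 := by
    intro y hy
    have hyD : y ∈ D := hball (ball_subset_closedBall hy)
    have h2 : fderiv ℝ (fderiv ℝ u) y = fderiv ℝ (fderiv ℝ v) y := by
      apply Filter.EventuallyEq.fderiv_eq
      filter_upwards [isOpen_ball.mem_nhds (hball_sub hy)] with z hz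
      exact hfd z hz
    have h3 := hharm y hyD
    rw [euclideanLaplacian] at h3
    calc ∑ i, fderiv ℝ (fderiv ℝ u) y (EuclideanSpace.single i 1) (EuclideanSpace.single i 1)
        = ∑ i, iteratedFDeriv ℝ 2 v y ![EuclideanSpace.single i 1, EuclideanSpace.single i 1] := by
          refine Finset.sum_congr rfl fun i _ => ?_
          rw [iteratedFDeriv_two_apply, h2]
          simp
      _ = 0 := h3
  have hkey := key_identity y₀ hr u hu hsupp hlap
  -- continuity facts for u
  have hu1 : ContDiff ℝ 1 (fderiv ℝ u) := hu.fderiv_right (by norm_num)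
  have hcont1 : Continuous (fderiv ℝ u) := hu1.continuous
  have hcontu : Continuous u := hu.continuous
  have hgradcont : Continuous (fun y => gradient u y) := by
    have : (fun y => gradient u y)
        = fun y => (InnerProductSpace.toDual ℝ (EuclideanSpace ℝ (Fin (N + 1)))).symm
            (fderiv ℝ u y) := by
      funext y; rw [gradient]
    rw [this]
    exact (InnerProductSpace.toDual ℝ _).symm.continuous.comp hcont1
  -- transfer integrals from v to u
  have hgradBall : ∀ y ∈ ball y₀ r, gradient u y = gradient v y := by
    intro y hy
    rw [gradient, gradient, hfd y (hball_sub hy)]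
  have hEqBall : ∀ y ∈ ball y₀ r, u y = v y := fun y hy => hEq y (hball_sub hy)
  have e1 : ∫ y in ball y₀ r, ‖gradient v y‖ ^ 2 * (r ^ 2 - ‖y - y₀‖ ^ 2)
      = ∫ y in ball y₀ r, ‖gradient u y‖ ^ 2 * (r ^ 2 - ‖y - y₀‖ ^ 2) :=
    setIntegral_congr_fun measurableSet_ball (fun y hy => by rw [hgradBall y hy])
  have e2 : ∫ y in ball y₀ r, (inner ℝ (y - y₀) (gradient v y) : ℝ) ^ 2
      = ∫ y in ball y₀ r, (inner ℝ (y - y₀) (gradient u y) : ℝ) ^ 2 :=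
    setIntegral_congr_fun measurableSet_ball (fun y hy => by rw [hgradBall y hy])
  have e3 : ∫ y in ball y₀ r, (v y) ^ 2 = ∫ y in ball y₀ r, (u y) ^ 2 :=
    setIntegral_congr_fun measurableSet_ball (fun y hy => by rw [hEqBall y hy])
  -- Cauchy-Schwarz
  have hinncont : Continuous (fun y => (inner ℝ (y - y₀) (gradient u y) : ℝ)) :=
    ((continuous_id.sub continuous_const)).inner hgradcont
  have hioc : ∀ (h : EuclideanSpace ℝ (Fin (N + 1)) → ℝ), Continuous h →
      Integrable h (volume.restrict (ball y₀ r)) := by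
    intro h hc
    exact ((hc.continuousOn.integrableOn_compact (isCompact_closedBall y₀ r)).mono_set
      ball_subset_closedBall)
  have hf2 : Integrable (fun y => (inner ℝ (y - y₀) (gradient u y) : ℝ) ^ 2)
      (volume.restrict (ball y₀ r)) := hioc _ (hinncont.pow 2)
  have hg2 : Integrable (fun y => (u y) ^ 2) (volume.restrict (ball y₀ r)) :=
    hioc _ (hcontu.pow 2)
  have hfg : Integrable (fun y => (inner ℝ (y - y₀) (gradient u y) : ℝ) * u y)
      (volume.restrict (ball y₀ r)) := hioc _ (hinncont.mul hcontu)
  have hcs := cs_integral (volume.restrict (ball y₀ r))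
    (fun y => (inner ℝ (y - y₀) (gradient u y) : ℝ)) u hf2 hg2 hfg
  have hcomm : ∫ y in ball y₀ r, u y * (inner ℝ (y - y₀) (gradient u y) : ℝ)
      = ∫ y in ball y₀ r, (inner ℝ (y - y₀) (gradient u y) : ℝ) * u y := by
    refine setIntegral_congr_fun measurableSet_ball (fun y _ => ?_)
    ring
  have hA : 0 ≤ ∫ y in ball y₀ r, (inner ℝ (y - y₀) (gradient u y) : ℝ) ^ 2 :=
    integral_nonneg fun y => sq_nonneg _
  have hB : 0 ≤ ∫ y in ball y₀ r, (u y) ^ 2 := integral_nonneg fun y => sq_nonneg _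
  rw [e1, e2, e3, hkey, hcomm]
  nlinarith [hcs]
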